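/- Let $S$ be a finite set with $|S| = R \ge 2$ and weights $T_a \ge 1$ for $a \in S$, not all $T_a$ equal. For $z \in [0, \log R]$ define $g(z) = \max\{\sum_{a\in S} p_a \log T_a : (p_a) \text{ probability vector on } S, -\sum_a p_a \log p_a = z\}$. Then $g(z) = \max\{\sum_{a\in S} p_a \log T_a : (p_a) \text{ probability vector on } S, -\sum_a p_a \log p_a \geq z\}$, i.e. the constrained maximum over the equality set equals the maximum over the superlevel set. -/
import Mathlib

open Real Finset

lemma key_lemma {S : Type*} [Fintype S] [Nonempty S] (T : S → ℝ) (hT1 : ∀ a, 1 ≤ T a)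
    (z : ℝ) (hz0 : 0 ≤ z) (p : S → ℝ) (hp0 : ∀ a, 0 ≤ p a) (hp1 : (∑ a : S, p a) = 1)
    (hpz : z ≤ -∑ a : S, p a * Real.log (p a)) :
    ∃ q : S → ℝ, (∀ a, 0 ≤ q a) ∧ (∑ a : S, q a) = 1 ∧
      (-∑ a : S, q a * Real.log (q a)) = z ∧
      ∑ a : S, p a * Real.log (T a) ≤ ∑ a : S, q a * Real.log (T a) := by
  classical
  obtain ⟨b, hb⟩ := Finite.exists_max T
  set d : S → ℝ := fun a => if a = b then (1:ℝ) else 0 with hd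
  have hd0 : ∀ a, 0 ≤ d a := by intro a; by_cases h : a = b <;> simp [hd, h]
  have hdsum : (∑ a : S, d a) = 1 := by simp [hd]
  have hdlog : ∀ a, d a * Real.log (d a) = 0 := by
    intro a; by_cases h : a = b <;> simp [hd, h]
  set Q : ℝ → S → ℝ := fun t a => (1 - t) * p a + t * d a with hQ
  set f : ℝ → ℝ := fun t => -∑ a : S, Q t a * Real.log (Q t a) with hf
  have hcont : Continuous f := by
    apply Continuous.neg
    apply continuous_finset_sum
    intro a _
    exact Real.continuous_mul_log.comp (by fun_prop)
  have hf0 : f 0 = -∑ a : S, p a * Real.log (p a) := by simp [hf, hQ]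
  have hf1 : f 1 = 0 := by simp [hf, hQ, hdlog]
  have hmem : z ∈ Set.Icc (f 1) (f 0) := by
    rw [hf0, hf1]; exact ⟨hz0, hpz⟩
  obtain ⟨t, ht, hft⟩ := intermediate_value_Icc' (zero_le_one) hcont.continuousOn hmem
  refine ⟨Q t, ?_, ?_, hft, ?_⟩
  · intro a
    exact add_nonneg (mul_nonneg (by linarith [ht.2]) (hp0 a)) (mul_nonneg ht.1 (hd0 a))
  · simp only [hQ]
    rw [Finset.sum_add_distrib, ← Finset.mul_sum, ← Finset.mul_sum, hp1, hdsum]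
    ring
  · have hX : ∑ a : S, p a * Real.log (T a) ≤ Real.log (T b) := by
      calc ∑ a : S, p a * Real.log (T a) ≤ ∑ a : S, p a * Real.log (T b) := by
            apply Finset.sum_le_sum
            intro a _
            exact mul_le_mul_of_nonneg_left
              (Real.log_le_log (lt_of_lt_of_le one_pos (hT1 a)) (hb a)) (hp0 a)
        _ = Real.log (T b) := by rw [← Finset.sum_mul, hp1, one_mul]
    have hdT : ∑ a : S, d a * Real.log (T a) = Real.log (T b) := by simp [hd]
    have : ∑ a : S, Q t a * Real.log (T a)
        = (1 - t) * (∑ a : S, p a * Real.log (T a)) + t * Real.log (T b) := by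
      simp only [hQ, add_mul, mul_assoc]
      rw [Finset.sum_add_distrib, ← Finset.mul_sum, ← Finset.mul_sum, hdT]
    rw [this]
    nlinarith [ht.1, ht.2, hX]

theorem stmt6 (S : Type*) [Fintype S] (hR : 2 ≤ Fintype.card S) (T : S → ℝ)
    (hT1 : ∀ a, 1 ≤ T a) (hTne : ∃ a b : S, T a ≠ T b)
    (z : ℝ) (hz0 : 0 ≤ z) (hz1 : z ≤ Real.log (Fintype.card S)) :
    sSup {x : ℝ | ∃ p : S → ℝ, (∀ a, 0 ≤ p a) ∧ (∑ a : S, p a) = 1 ∧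
        (-∑ a : S, p a * Real.log (p a)) = z ∧ x = ∑ a : S, p a * Real.log (T a)} =
      sSup {x : ℝ | ∃ p : S → ℝ, (∀ a, 0 ≤ p a) ∧ (∑ a : S, p a) = 1 ∧
        z ≤ (-∑ a : S, p a * Real.log (p a)) ∧ x = ∑ a : S, p a * Real.log (T a)} := by
  have hne : Nonempty S := Fintype.card_pos_iff.mp (by omega)
  set A := {x : ℝ | ∃ p : S → ℝ, (∀ a, 0 ≤ p a) ∧ (∑ a : S, p a) = 1 ∧
        (-∑ a : S, p a * Real.log (p a)) = z ∧ x = ∑ a : S, p a * Real.log (T a)} with hA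
  set B := {x : ℝ | ∃ p : S → ℝ, (∀ a, 0 ≤ p a) ∧ (∑ a : S, p a) = 1 ∧
        z ≤ (-∑ a : S, p a * Real.log (p a)) ∧ x = ∑ a : S, p a * Real.log (T a)} with hB
  obtain ⟨b, hb⟩ := Finite.exists_max T
  -- B is bounded above by log (T b)
  have hbddB : BddAbove B := by
    refine ⟨Real.log (T b), ?_⟩
    rintro x ⟨p, hp0, hp1, -, rfl⟩
    calc ∑ a : S, p a * Real.log (T a) ≤ ∑ a : S, p a * Real.log (T b) := by
          apply Finset.sum_le_sum
          intro a _
          exact mul_le_mul_of_nonneg_left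
            (Real.log_le_log (lt_of_lt_of_le one_pos (hT1 a)) (hb a)) (hp0 a)
      _ = Real.log (T b) := by rw [← Finset.sum_mul, hp1, one_mul]
  have hAB : A ⊆ B := by
    rintro x ⟨p, hp0, hp1, hpz, rfl⟩
    exact ⟨p, hp0, hp1, hpz.ge, rfl⟩
  have hbddA : BddAbove A := hbddB.mono hAB
  -- A is nonempty: start from uniform distribution
  have hcard : (0:ℝ) < (Fintype.card S : ℝ) := by positivity
  have hu0 : ∀ a : S, (0:ℝ) ≤ (Fintype.card S : ℝ)⁻¹ := fun a => by positivity
  have hu1 : (∑ _a : S, ((Fintype.card S : ℝ)⁻¹)) = 1 := by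
    rw [Finset.sum_const, nsmul_eq_mul, Finset.card_univ, mul_inv_cancel₀ (ne_of_gt hcard)]
  have huH : (-∑ _a : S, ((Fintype.card S : ℝ)⁻¹) * Real.log ((Fintype.card S : ℝ)⁻¹))
      = Real.log (Fintype.card S) := by
    rw [Finset.sum_const, nsmul_eq_mul, Finset.card_univ, Real.log_inv]
    field_simp
  obtain ⟨q, hq0, hq1, hqz, -⟩ := key_lemma T hT1 z hz0 (fun _ => (Fintype.card S : ℝ)⁻¹)
    hu0 hu1 (by rw [huH]; exact hz1)
  have hAne : A.Nonempty := ⟨∑ a : S, q a * Real.log (T a), q, hq0, hq1, hqz, rfl⟩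
  apply le_antisymm
  · exact csSup_le_csSup hbddB hAne hAB
  · apply csSup_le (hAne.mono hAB)
    rintro x ⟨p, hp0, hp1, hpz, rfl⟩
    obtain ⟨q, hq0, hq1, hqz, hle⟩ := key_lemma T hT1 z hz0 p hp0 hp1 hpz
    exact le_trans hle (le_csSup hbddA ⟨q, hq0, hq1, hqz, rfl⟩)
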